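/- Let γ ∈ (1,2) and define q_γ(ξ) = f_γ(ξ) + f_γ(-ξ). Then q_γ is real-valued, continuous and nonnegative on [-π,π]; it vanishes only at ξ = 0; and it has a zero of order γ at the origin, in the sense that lim_{ξ→0} q_γ(ξ)/|ξ|^γ = -2 cos(γπ/2), which is a strictly positive real number for γ ∈ (1,2). -/

import Mathlib

open scoped Real Topology
open Filter

/-- Alternating fractional binomial coefficients. -/
noncomputable def gcoef (γ : ℝ) (k : ℕ) : ℝ :=
  (-1 : ℝ) ^ k / (Nat.factorial k) * ∏ i ∈ Finset.range k, (γ - i)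

/-- WSGD weights. -/
noncomputable def w (γ : ℝ) : ℕ → ℝ
  | 0 => γ / 2 * gcoef γ 0
  | (k + 1) => γ / 2 * gcoef γ (k + 1) + (2 - γ) / 2 * gcoef γ k

/-- The symbol `f_γ(ξ) = -∑_{k=-1}^∞ w_{k+1}^{(γ)} e^{ikξ}`. -/
noncomputable def fsym (γ : ℝ) (ξ : ℝ) : ℂ :=
  -∑' k : ℕ, (w γ k : ℂ) * Complex.exp (Complex.I * ((k : ℂ) - 1) * (ξ : ℂ))

/-- `q_γ(ξ) = f_γ(ξ) + f_γ(-ξ)`. -/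
noncomputable def qsym (γ : ℝ) (ξ : ℝ) : ℂ := fsym γ ξ + fsym γ (-ξ)

lemma gcoef_zero (γ : ℝ) : gcoef γ 0 = 1 := by simp [gcoef]

lemma gcoef_succ (γ : ℝ) (k : ℕ) :
    gcoef γ (k + 1) = gcoef γ k * ((k - γ) / (k + 1)) := by
  simp only [gcoef, Finset.prod_range_succ, Nat.factorial_succ, pow_succ]
  push_cast
  field_simp
  ring

lemma gcoef_one (γ : ℝ) : gcoef γ 1 = -γ := by
  rw [gcoef_succ, gcoef_zero]; norm_num

lemma gcoef_shift (γ : ℝ) (n : ℕ) :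
    gcoef γ (n + 1) = gcoef (γ - 1) n * (-γ / (n + 1)) := by
  simp only [gcoef, Nat.factorial_succ, pow_succ]
  rw [Finset.prod_range_succ']
  push_cast
  have : ∀ i ∈ Finset.range n, γ - ((i:ℝ) + 1) = γ - 1 - i := by intro i _; ring
  rw [Finset.prod_congr rfl this]
  field_simp
  ring

lemma gcoef_pascal (γ : ℝ) (n : ℕ) :
    gcoef (γ - 1) (n + 1) = gcoef (γ - 1) n + gcoef γ (n + 1) := by
  rw [gcoef_succ, gcoef_shift]
  have h1 : (n:ℝ) + 1 ≠ 0 := by positivity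
  field_simp
  ring

section bounds
variable {γ : ℝ} (hγ1 : 1 < γ) (hγ2 : γ < 2)

lemma gcoef_nonneg (hγ1 : 1 < γ) (hγ2 : γ < 2) : ∀ k, 0 ≤ gcoef γ (k + 2) := by
  intro k
  induction k with
  | zero =>
      rw [gcoef_succ, gcoef_one]
      push_cast
      nlinarith
  | succ k ih =>
      rw [gcoef_succ]
      apply mul_nonneg ih
      apply div_nonneg _ (by positivity)
      push_cast
      nlinarith [(Nat.one_le_cast (α := ℝ)).mpr (Nat.succ_le_succ (Nat.zero_le k))]

lemma gcoef_abs_le (hγ1 : 1 < γ) (hγ2 : γ < 2) : ∀ k, |gcoef γ k| ≤ γ := by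
  intro k
  induction k with
  | zero => rw [gcoef_zero]; rw [abs_one]; linarith
  | succ k ih =>
      rw [gcoef_succ, abs_mul, abs_div]
      rcases Nat.eq_zero_or_pos k with rfl | hk
      · simp only [gcoef_zero, abs_one, one_mul, Nat.cast_zero, zero_sub, abs_neg]
        rw [abs_of_nonneg (by linarith : (0:ℝ) ≤ γ), abs_of_nonneg (by norm_num : (0:ℝ) ≤ (0:ℝ)+1)]
        rw [div_le_iff₀ (by norm_num)]
        linarith
      · have h1 : |(k:ℝ) - γ| ≤ (k:ℝ) + 1 := by
          rw [abs_le]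
          constructor
          · have : (1:ℝ) ≤ k := Nat.one_le_cast.mpr hk
            nlinarith
          · linarith
        have h2 : |(k:ℝ) + 1| = (k:ℝ) + 1 := abs_of_pos (by positivity)
        push_cast
        rw [h2]
        calc |gcoef γ k| * (|(k:ℝ) - γ| / ((k:ℝ)+1))
            ≤ γ * 1 := by
              apply mul_le_mul ih _ (by positivity) (by linarith)
              rw [div_le_one (by positivity)]
              exact h1
          _ = γ := mul_one γ

lemma gcoef_abs_le_one (hγ1 : 1 < γ) (hγ2 : γ < 2) : ∀ k, |gcoef (γ-1) k| ≤ 1 := by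
  intro k
  induction k with
  | zero => simp [gcoef_zero]
  | succ k ih =>
      rw [gcoef_succ, abs_mul, abs_div]
      have h1 : |(k:ℝ) - (γ-1)| ≤ (k:ℝ) + 1 := by
        rw [abs_le]; constructor <;> [nlinarith [Nat.cast_nonneg (α:=ℝ) k]; linarith]
      have h2 : |(k:ℝ) + 1| = (k:ℝ) + 1 := abs_of_pos (by positivity)
      push_cast
      rw [h2]
      calc |gcoef (γ-1) k| * (|(k:ℝ) - (γ-1)| / ((k:ℝ)+1))
          ≤ 1 * 1 := by
            apply mul_le_mul ih _ (by positivity) (by norm_num)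
            rw [div_le_one (by positivity)]
            exact h1
        _ = 1 := by norm_num

lemma gcoef_partial_sum (γ : ℝ) : ∀ n, ∑ k ∈ Finset.range (n+1), gcoef γ k = gcoef (γ-1) n := by
  intro n
  induction n with
  | zero => simp [gcoef_zero]
  | succ n ih => rw [Finset.sum_range_succ, ih, gcoef_pascal]

lemma summable_abs_gcoef (hγ1 : 1 < γ) (hγ2 : γ < 2) : Summable (fun k => |gcoef γ k|) := by
  rw [← summable_nat_add_iff 2]
  have heq : ∀ k, |gcoef γ (k+2)| = gcoef γ (k+2) := fun k => abs_of_nonneg (gcoef_nonneg hγ1 hγ2 k)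
  simp only [heq]
  apply summable_of_sum_range_le (c := γ) (fun k => gcoef_nonneg hγ1 hγ2 k)
  intro n
  have h : ∑ i ∈ Finset.range n, gcoef γ (i + 2) = (∑ k ∈ Finset.range (n+2), gcoef γ k) - gcoef γ 0 - gcoef γ 1 := by
    induction n with
    | zero => simp [Finset.sum_range_succ]
    | succ n ih => rw [Finset.sum_range_succ, ih, Finset.sum_range_succ (n := n+2)]; ring
  rw [h, gcoef_partial_sum γ (n+1), gcoef_zero, gcoef_one]
  have := (abs_le.mp (gcoef_abs_le_one hγ1 hγ2 (n+1))).2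
  linarith

end bounds

section disc
variable {γ : ℝ}

lemma gcoef_rec_complex (γ : ℝ) (n : ℕ) :
    ((n:ℂ) + 1) * (gcoef γ (n+1) : ℂ) = ((n:ℂ) - γ) * (gcoef γ n : ℂ) := by
  have h := gcoef_succ γ n
  have hne : (n:ℝ) + 1 ≠ 0 := by positivity
  have : ((n:ℝ) + 1) * gcoef γ (n+1) = ((n:ℝ) - γ) * gcoef γ n := by
    rw [h]; field_simp
  exact_mod_cast congrArg (fun x : ℝ => (x : ℂ)) this

lemma summable_gcoef_mul_pow (hγ1 : 1 < γ) (hγ2 : γ < 2) {z : ℂ} (hz : ‖z‖ ≤ 1) :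
    Summable (fun n => (gcoef γ n : ℂ) * z ^ n) := by
  apply Summable.of_norm
  apply Summable.of_nonneg_of_le (fun n => norm_nonneg _) _ (summable_abs_gcoef hγ1 hγ2)
  intro n
  rw [norm_mul, norm_pow, Complex.norm_real, Real.norm_eq_abs]
  calc |gcoef γ n| * ‖z‖ ^ n ≤ |gcoef γ n| * 1 := by
        apply mul_le_mul_of_nonneg_left _ (abs_nonneg _)
        exact pow_le_one₀ (norm_nonneg z) hz
    _ = _ := mul_one _

lemma hasSum_gcoef_disc (hγ1 : 1 < γ) (hγ2 : γ < 2) {z : ℂ} (hz : ‖z‖ < 1) :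
    ∑' n, (gcoef γ n : ℂ) * z ^ n = (1 - z) ^ (γ : ℂ) := by
  set F : ℂ → ℂ := fun y => ∑' n, (gcoef γ n : ℂ) * y ^ n with hF
  set r : ℝ := (1 + ‖z‖) / 2 with hr
  have hr0 : 0 < r := by positivity
  have hr1 : r < 1 := by rw [hr]; linarith
  have hzr : ‖z‖ < r := by rw [hr]; linarith
  have hball : ∀ y : ℂ, y ∈ Metric.ball (0:ℂ) r → ‖y‖ < 1 := by
    intro y hy; rw [Metric.mem_ball, dist_zero_right] at hy; linarith
  have hslit : ∀ y : ℂ, ‖y‖ < 1 → (1 - y) ∈ Complex.slitPlane := by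
    intro y hy
    left
    have : |y.re| ≤ ‖y‖ := Complex.abs_re_le_norm y
    simp only [Complex.sub_re, Complex.one_re]
    have := abs_le.mp this
    linarith
  have hne1 : ∀ y : ℂ, ‖y‖ < 1 → (1 : ℂ) - y ≠ 0 := by
    intro y hy h
    have : (1:ℂ) = y := by linear_combination h
    rw [← this] at hy; simp at hy
  -- summable bound for derivatives
  have hu : Summable (fun n : ℕ => γ * ((n:ℝ) * r ^ (n - 1))) := by
    apply Summable.mul_left
    rw [← summable_nat_add_iff 1]
    simp only [Nat.add_sub_cancel, Nat.cast_add, Nat.cast_one]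
    have h1 : Summable (fun n : ℕ => (n:ℝ) * r ^ n) := by
      simpa using summable_pow_mul_geometric_of_norm_lt_one 1 (by rwa [Real.norm_eq_abs, abs_of_pos hr0])
    have h2 : Summable (fun n : ℕ => r ^ n) := summable_geometric_of_lt_one hr0.le hr1
    simpa [add_mul] using h1.add h2
  -- derivative of F on the ball
  have hderivF : ∀ y ∈ Metric.ball (0:ℂ) r,
      HasDerivAt F (∑' n, (gcoef γ n : ℂ) * ((n:ℂ) * y ^ (n - 1))) y := by
    intro y hy
    apply hasDerivAt_tsum_of_isPreconnected (y₀ := (0:ℂ)) hu Metric.isOpen_ball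
      (Convex.isPreconnected (convex_ball 0 r))
      (g' := fun n x => (gcoef γ n : ℂ) * ((n:ℂ) * x ^ (n - 1)))
      (fun n x _ => (hasDerivAt_pow n x).const_mul _)
      _ (Metric.mem_ball_self hr0)
      (summable_gcoef_mul_pow hγ1 hγ2 (z := 0) (by simp))
      hy
    intro n x hx
    rw [Metric.mem_ball, dist_zero_right] at hx
    rw [norm_mul, norm_mul, Complex.norm_real, Real.norm_eq_abs, Complex.norm_natCast, norm_pow]
    calc |gcoef γ n| * ((n:ℝ) * ‖x‖ ^ (n - 1))
        ≤ γ * ((n:ℝ) * r ^ (n-1)) := by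
          apply mul_le_mul (gcoef_abs_le hγ1 hγ2 n) _ (by positivity) (by linarith)
          apply mul_le_mul_of_nonneg_left _ (Nat.cast_nonneg n)
          exact pow_le_pow_left₀ (norm_nonneg x) hx.le _
      _ = _ := rfl
  -- summability of the derivative series inside the ball
  have hsumA : ∀ y : ℂ, ‖y‖ < 1 → Summable (fun n => (gcoef γ n : ℂ) * ((n:ℂ) * y ^ (n - 1))) := by
    intro y hy
    apply Summable.of_norm
    set s : ℝ := (1 + ‖y‖)/2 with hs
    have hs0 : 0 < s := by positivity
    have hs1 : s < 1 := by rw [hs]; linarith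
    have hys : ‖y‖ ≤ s := by rw [hs]; linarith
    have husum : Summable (fun n : ℕ => γ * ((n:ℝ) * s ^ (n - 1))) := by
      apply Summable.mul_left
      rw [← summable_nat_add_iff 1]
      simp only [Nat.add_sub_cancel, Nat.cast_add, Nat.cast_one]
      have h1 : Summable (fun n : ℕ => (n:ℝ) * s ^ n) := by
        simpa using summable_pow_mul_geometric_of_norm_lt_one 1 (by rwa [Real.norm_eq_abs, abs_of_pos hs0])
      have h2 : Summable (fun n : ℕ => s ^ n) := summable_geometric_of_lt_one hs0.le hs1
      simpa [add_mul] using h1.add h2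
    apply Summable.of_nonneg_of_le (fun n => norm_nonneg _) _ husum
    intro n
    rw [norm_mul, norm_mul, Complex.norm_real, Real.norm_eq_abs, Complex.norm_natCast, norm_pow]
    calc |gcoef γ n| * ((n:ℝ) * ‖y‖ ^ (n - 1))
        ≤ γ * ((n:ℝ) * s ^ (n-1)) := by
          apply mul_le_mul (gcoef_abs_le hγ1 hγ2 n) _ (by positivity) (by linarith)
          exact mul_le_mul_of_nonneg_left (pow_le_pow_left₀ (norm_nonneg y) hys _) (Nat.cast_nonneg n)
      _ = _ := rfl
  -- the ODE `(1-y) * A y = -γ * F y`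
  have hODE : ∀ y : ℂ, ‖y‖ < 1 →
      (1 - y) * (∑' n, (gcoef γ n : ℂ) * ((n:ℂ) * y ^ (n - 1))) + (γ:ℂ) * F y = 0 := by
    intro y hy
    set A : ℂ := ∑' n, (gcoef γ n : ℂ) * ((n:ℂ) * y ^ (n - 1)) with hA
    have hshift : Summable (fun n => (gcoef γ (n+1) : ℂ) * (((n:ℂ)+1) * y ^ n)) := by
      have := (summable_nat_add_iff 1).mpr (hsumA y hy)
      apply this.congr
      intro n
      simp only [Nat.add_sub_cancel]
      push_cast
      ring
    have hAeq : A = ∑' n, (gcoef γ (n+1) : ℂ) * (((n:ℂ)+1) * y ^ n) := by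
      rw [hA, Summable.tsum_eq_zero_add (hsumA y hy)]
      simp only [Nat.cast_zero, zero_mul, mul_zero, zero_add]
      congr 1
      funext n
      simp only [Nat.add_sub_cancel]
      push_cast
      ring
    have hyA : Summable (fun n => (gcoef γ n : ℂ) * ((n:ℂ) * y ^ n)) := by
      have := (hsumA y hy).mul_left y
      apply this.congr
      intro n
      cases n with
      | zero => simp
      | succ n => simp only [Nat.add_sub_cancel]; push_cast; ring
    have hyAeq : y * A = ∑' n, (gcoef γ n : ℂ) * ((n:ℂ) * y ^ n) := by
      rw [hA, ← tsum_mul_left]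
      congr 1
      funext n
      cases n with
      | zero => simp
      | succ n => simp only [Nat.add_sub_cancel]; push_cast; ring
    have key : A - y * A = -(γ:ℂ) * F y := by
      rw [hyAeq, hAeq, ← Summable.tsum_sub hshift hyA, hF]
      rw [← tsum_mul_left]
      congr 1
      funext n
      have hrec := gcoef_rec_complex γ n
      linear_combination y ^ n * hrec
    linear_combination key
  -- the function G is locally constant
  set G : ℂ → ℂ := fun y => F y * Complex.exp (-((γ:ℂ) * Complex.log (1 - y))) with hG
  have hGderiv : ∀ y ∈ Metric.ball (0:ℂ) r, HasDerivAt G 0 y := by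
    intro y hy
    have hy1 : ‖y‖ < 1 := hball y hy
    have h1my : (1:ℂ) - y ≠ 0 := hne1 y hy1
    have hlog : HasDerivAt (fun x : ℂ => Complex.log (1 - x)) ((1-y)⁻¹ * (-1)) y := by
      have hin : HasDerivAt (fun x : ℂ => 1 - x) (-1) y := (hasDerivAt_id y).const_sub 1
      exact (Complex.hasDerivAt_log (hslit y hy1)).comp y hin
    have hinner : HasDerivAt (fun x : ℂ => -((γ:ℂ) * Complex.log (1 - x)))
        ((γ:ℂ) * (1-y)⁻¹) y := by
      have := (hlog.const_mul (γ:ℂ)).neg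
      exact this.congr_deriv (by ring)
    have hexp := hinner.cexp
    have hmul := (hderivF y hy).mul hexp
    have heq : (∑' n, (gcoef γ n : ℂ) * ((n:ℂ) * y ^ (n - 1))) *
          Complex.exp (-((γ:ℂ) * Complex.log (1 - y))) +
        F y * (Complex.exp (-((γ:ℂ) * Complex.log (1 - y))) * ((γ:ℂ) * (1-y)⁻¹)) = 0 := by
      have hode := hODE y hy1
      have hinv : (1 - y) * (1 - y)⁻¹ = 1 := mul_inv_cancel₀ h1my
      set e : ℂ := Complex.exp (-((γ:ℂ) * Complex.log (1 - y)))
      set Ay : ℂ := ∑' n, (gcoef γ n : ℂ) * ((n:ℂ) * y ^ (n - 1))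
      linear_combination (e * (1-y)⁻¹) * hode - (Ay * e) * hinv
    rw [hG]
    have : HasDerivAt (fun y_1 => F y_1 * Complex.exp (-((γ:ℂ) * Complex.log (1 - y_1)))) _ y := hmul
    rw [heq] at this
    exact this
  -- conclude G is constant on the ball
  have hGz : G z = G 0 := by
    have hzball : z ∈ Metric.ball (0:ℂ) r := by rwa [Metric.mem_ball, dist_zero_right]
    have h0ball : (0:ℂ) ∈ Metric.ball (0:ℂ) r := Metric.mem_ball_self hr0
    have := Convex.norm_image_sub_le_of_norm_hasFDerivWithin_le
      (f := G) (f' := fun _ => (0 : ℂ →L[ℝ] ℂ)) (C := 0)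
      (fun y hy => by
        have h := (((hGderiv y hy).hasFDerivAt).restrictScalars ℝ).hasFDerivWithinAt
          (s := Metric.ball 0 r)
        have hzero : (ContinuousLinearMap.toSpanSingleton ℂ (0:ℂ)).restrictScalars ℝ
            = (0 : ℂ →L[ℝ] ℂ) := by ext x; simp
        rwa [hzero] at h)
      (fun y hy => by simp) (convex_ball 0 r) h0ball hzball
    simp only [norm_zero, zero_mul] at this
    have h0 : ‖G z - G 0‖ = 0 := le_antisymm (by simpa using this) (norm_nonneg _)
    have := norm_eq_zero.mp h0
    linear_combination this
  have hF0 : F 0 = 1 := by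
    show (∑' n, (gcoef γ n : ℂ) * (0:ℂ) ^ n) = 1
    rw [tsum_eq_single 0]
    · simp [gcoef_zero]
    · intro n hn
      simp [zero_pow hn]
  have hG0 : G 0 = 1 := by
    rw [hG]
    simp [hF0, Complex.log_one]
  have hexp_ne : Complex.exp (-((γ:ℂ) * Complex.log (1 - z))) ≠ 0 := Complex.exp_ne_zero _
  have hFz : F z = Complex.exp ((γ:ℂ) * Complex.log (1 - z)) := by
    have h := hGz.trans hG0
    rw [hG] at h
    simp only at h
    rw [Complex.exp_neg] at h
    field_simp at h
    exact h
  show F z = (1 - z) ^ (γ:ℂ)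
  rw [hFz, Complex.cpow_def_of_ne_zero (hne1 z hz), mul_comm]

end disc

lemma tsum_gcoef_circle (hγ1 : 1 < γ) (hγ2 : γ < 2) {z : ℂ} (hz : ‖z‖ = 1) :
    ∑' n, (gcoef γ n : ℂ) * z ^ n = (1 - z) ^ (γ : ℂ) := by
  have hioo : Set.Ioo (0:ℝ) 1 ∈ 𝓝[<] (1:ℝ) :=
    Ioo_mem_nhdsLT_of_mem (by constructor <;> norm_num)
  -- LHS limit
  have hL : Tendsto (fun r : ℝ => ∑' n, (gcoef γ n : ℂ) * ((r:ℂ) * z) ^ n) (𝓝[<] (1:ℝ))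
      (𝓝 (∑' n, (gcoef γ n : ℂ) * z ^ n)) := by
    apply tendsto_tsum_of_dominated_convergence (bound := fun n => |gcoef γ n|)
      (summable_abs_gcoef hγ1 hγ2)
    · intro n
      have hc : Continuous (fun r : ℝ => (gcoef γ n : ℂ) * ((r:ℂ) * z) ^ n) := by
        continuity
      have := (hc.tendsto 1).mono_left (nhdsWithin_le_nhds (s := Set.Iio (1:ℝ)))
      simpa using this
    · filter_upwards [hioo] with r hr n
      rw [norm_mul, norm_pow, norm_mul, Complex.norm_real, Real.norm_eq_abs, hz,
        Complex.norm_real, Real.norm_eq_abs, mul_one, abs_of_pos hr.1]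
      calc |gcoef γ n| * r ^ n ≤ |gcoef γ n| * 1 := by
            apply mul_le_mul_of_nonneg_left _ (abs_nonneg _)
            exact pow_le_one₀ hr.1.le hr.2.le
        _ = _ := mul_one _
  -- RHS limit
  have hR : Tendsto (fun r : ℝ => ((1:ℂ) - (r:ℂ) * z) ^ (γ:ℂ)) (𝓝[<] (1:ℝ))
      (𝓝 ((1 - z) ^ (γ:ℂ))) := by
    by_cases hz1 : z = 1
    · subst hz1
      have hγR : γ ≠ 0 := by linarith
      have hγ0 : (γ:ℂ) ≠ 0 := by exact_mod_cast hγR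
      rw [sub_self, Complex.zero_cpow hγ0]
      have hreal : Tendsto (fun r : ℝ => (1 - r) ^ γ) (𝓝[<] (1:ℝ)) (𝓝 (0:ℝ)) := by
        have hc : ContinuousAt (fun x : ℝ => x ^ γ) 0 :=
          Real.continuousAt_rpow_const 0 γ (Or.inr (by linarith))
        have h0 : Tendsto (fun r : ℝ => 1 - r) (𝓝[<] (1:ℝ)) (𝓝 (0:ℝ)) := by
          have : Tendsto (fun r : ℝ => 1 - r) (𝓝 (1:ℝ)) (𝓝 (0:ℝ)) := by
            have hcs : Continuous (fun r : ℝ => 1 - r) := continuous_const.sub continuous_id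
            have := hcs.tendsto 1
            simpa using this
          exact this.mono_left nhdsWithin_le_nhds
        have := hc.tendsto.comp h0
        simpa [Function.comp_def, Real.zero_rpow hγR] using this
      have hcast : Tendsto (fun r : ℝ => ((1 - r : ℝ) ^ γ : ℝ) : ℝ → ℝ) (𝓝[<] (1:ℝ)) (𝓝 0) := hreal
      have := (Complex.continuous_ofReal.tendsto 0).comp hcast
      apply this.congr'
      filter_upwards [hioo] with r hr
      simp only [Function.comp]
      rw [Complex.ofReal_cpow (by linarith [hr.2] : (0:ℝ) ≤ 1 - r)]
      push_cast
      ring_nf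
    · have hslit : (1 - z) ∈ Complex.slitPlane := by
        left
        simp only [Complex.sub_re, Complex.one_re]
        have h1 : z.re ≤ 1 := by
          have := Complex.abs_re_le_norm z
          rw [hz] at this
          exact (abs_le.mp this).2
        rcases lt_or_eq_of_le h1 with h | h
        · linarith
        · exfalso
          apply hz1
          have hsq : z.re ^ 2 + z.im ^ 2 = 1 := by
            have := Complex.sq_norm z
            rw [Complex.normSq_apply] at this
            rw [hz] at this
            nlinarith [this]
          have him : z.im = 0 := by nlinarith
          apply Complex.ext <;> simp [← h, him]
      have hcont : ContinuousAt (fun w : ℂ => w ^ (γ:ℂ)) (1 - z) :=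
        continuousAt_cpow_const hslit
      apply hcont.tendsto.comp
      have : Tendsto (fun r : ℝ => (1:ℂ) - (r:ℂ) * z) (𝓝 (1:ℝ)) (𝓝 (1 - z)) := by
        have hc : Continuous (fun r : ℝ => (1:ℂ) - (r:ℂ) * z) := by continuity
        have := hc.tendsto 1
        simpa using this
      exact this.mono_left (nhdsWithin_le_nhds)
  -- eventual equality
  have heq : ∀ᶠ r : ℝ in 𝓝[<] (1:ℝ),
      (∑' n, (gcoef γ n : ℂ) * ((r:ℂ) * z) ^ n) = ((1:ℂ) - (r:ℂ) * z) ^ (γ:ℂ) := by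
    filter_upwards [hioo] with r hr
    apply hasSum_gcoef_disc hγ1 hγ2
    rw [norm_mul, Complex.norm_real, Real.norm_eq_abs, hz, mul_one, abs_of_pos hr.1]
    exact hr.2
  have := hL.congr' heq
  exact tendsto_nhds_unique this hR

section closed
variable {γ : ℝ}

lemma w_zero (γ : ℝ) : w γ 0 = γ / 2 * gcoef γ 0 := rfl
lemma w_succ (γ : ℝ) (k : ℕ) :
    w γ (k+1) = γ / 2 * gcoef γ (k + 1) + (2 - γ) / 2 * gcoef γ k := rfl

lemma w_abs_le (hγ1 : 1 < γ) (hγ2 : γ < 2) (k : ℕ) :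
    |w γ k| ≤ γ/2 * |gcoef γ k| + |gcoef γ (k-1)| := by
  cases k with
  | zero =>
      rw [w_zero, gcoef_zero]
      simp only [Nat.zero_sub, gcoef_zero, abs_one, mul_one]
      rw [abs_of_pos (by linarith)]
      linarith
  | succ k =>
      rw [w_succ]
      simp only [Nat.add_sub_cancel]
      calc |γ / 2 * gcoef γ (k + 1) + (2 - γ) / 2 * gcoef γ k|
          ≤ |γ / 2 * gcoef γ (k + 1)| + |(2 - γ) / 2 * gcoef γ k| := abs_add_le _ _
        _ ≤ γ/2 * |gcoef γ (k+1)| + 1 * |gcoef γ k| := by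
            rw [abs_mul, abs_mul]
            gcongr
            · rw [abs_of_pos (by linarith : (0:ℝ) < γ/2)]
            · rw [abs_div]
              rw [abs_of_pos (by linarith : (0:ℝ) < 2 - γ), abs_of_pos (by norm_num : (0:ℝ) < 2)]
              linarith
        _ = _ := by ring

lemma summable_w_bound (hγ1 : 1 < γ) (hγ2 : γ < 2) :
    Summable (fun k => γ/2 * |gcoef γ k| + |gcoef γ (k-1)|) := by
  apply Summable.add ((summable_abs_gcoef hγ1 hγ2).mul_left _)
  rw [← summable_nat_add_iff 1]
  simpa using summable_abs_gcoef hγ1 hγ2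

lemma summable_abs_w (hγ1 : 1 < γ) (hγ2 : γ < 2) : Summable (fun k => |w γ k|) :=
  Summable.of_nonneg_of_le (fun _ => abs_nonneg _) (w_abs_le hγ1 hγ2)
    (summable_w_bound hγ1 hγ2)

lemma fsym_term_eq (γ : ℝ) (ξ : ℝ) (k : ℕ) :
    (w γ k : ℂ) * Complex.exp (Complex.I * ((k : ℂ) - 1) * (ξ : ℂ)) =
      ((w γ k : ℂ) * Complex.exp (Complex.I * ξ) ^ k) * Complex.exp (-(Complex.I * ξ)) := by
  have h : Complex.I * ((k:ℂ) - 1) * (ξ:ℂ) = (k:ℂ) * (Complex.I * ξ) + (-(Complex.I * ξ)) := by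
    ring
  rw [h, Complex.exp_add, Complex.exp_nat_mul]
  ring

lemma norm_exp_I_mul (ξ : ℝ) : ‖Complex.exp (Complex.I * ξ)‖ = 1 := by
  rw [Complex.norm_exp]
  simp

set_option maxHeartbeats 1000000 in
lemma tsum_w_mul_pow (hγ1 : 1 < γ) (hγ2 : γ < 2) {z : ℂ} (hz : ‖z‖ = 1) :
    ∑' k, (w γ k : ℂ) * z ^ k =
      (((γ:ℂ)/2) + ((2 - γ : ℝ):ℂ)/2 * z) * (1 - z) ^ (γ:ℂ) := by
  have hz1 : ‖z‖ ≤ 1 := le_of_eq hz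
  have hs : Summable (fun n => (gcoef γ n : ℂ) * z ^ n) := summable_gcoef_mul_pow hγ1 hγ2 hz1
  set S : ℂ := ∑' n, (gcoef γ n : ℂ) * z ^ n with hS
  have hshift : Summable (fun n => (gcoef γ (n+1) : ℂ) * z ^ (n+1)) :=
    (summable_nat_add_iff 1).mpr hs
  have hw : Summable (fun k => (w γ k : ℂ) * z ^ k) := by
    apply Summable.of_norm
    apply Summable.of_nonneg_of_le (fun n => norm_nonneg _) _
      (summable_w_bound hγ1 hγ2)
    intro n
    rw [norm_mul, norm_pow, hz, one_pow, mul_one, Complex.norm_real, Real.norm_eq_abs]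
    exact w_abs_le hγ1 hγ2 n
  rw [Summable.tsum_eq_zero_add hw]
  have hterm : ∀ n : ℕ, (w γ (n+1) : ℂ) * z ^ (n+1) =
      ((γ:ℂ)/2) * ((gcoef γ (n+1) : ℂ) * z ^ (n+1)) +
      (((2 - γ:ℝ):ℂ)/2 * z) * ((gcoef γ n : ℂ) * z ^ n) := by
    intro n
    rw [w_succ]
    push_cast
    ring
  have hsum1 : Summable (fun n => ((γ:ℂ)/2) * ((gcoef γ (n+1) : ℂ) * z ^ (n+1))) :=
    hshift.mul_left _
  have hsum2 : Summable (fun n => (((2 - γ:ℝ):ℂ)/2 * z) * ((gcoef γ n : ℂ) * z ^ n)) :=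
    hs.mul_left _
  calc (w γ 0 : ℂ) * z ^ 0 + ∑' n, (w γ (n+1) : ℂ) * z ^ (n+1)
      = (γ:ℂ)/2 + (∑' n, ((γ:ℂ)/2) * ((gcoef γ (n+1) : ℂ) * z ^ (n+1)) +
          ∑' n, (((2 - γ:ℝ):ℂ)/2 * z) * ((gcoef γ n : ℂ) * z ^ n)) := by
        rw [← Summable.tsum_add hsum1 hsum2]
        congr 1
        · rw [w_zero, gcoef_zero]; push_cast; ring
        · exact tsum_congr hterm
    _ = (γ:ℂ)/2 + (((γ:ℂ)/2) * (S - 1) + (((2 - γ:ℝ):ℂ)/2 * z) * S) := by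
        rw [tsum_mul_left, tsum_mul_left, ← hS]
        congr 2
        have := Summable.tsum_eq_zero_add hs
        rw [← hS] at this
        rw [this]
        simp [gcoef_zero]
    _ = (((γ:ℂ)/2) + ((2 - γ : ℝ):ℂ)/2 * z) * S := by ring
    _ = _ := by rw [hS, tsum_gcoef_circle hγ1 hγ2 hz]

lemma fsym_closed (hγ1 : 1 < γ) (hγ2 : γ < 2) (ξ : ℝ) :
    fsym γ ξ = -((((γ:ℂ)/2) + ((2 - γ : ℝ):ℂ)/2 * Complex.exp (Complex.I * ξ)) *
      (1 - Complex.exp (Complex.I * ξ)) ^ (γ:ℂ) * Complex.exp (-(Complex.I * ξ))) := by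
  rw [fsym]
  congr 1
  calc ∑' k : ℕ, (w γ k : ℂ) * Complex.exp (Complex.I * ((k : ℂ) - 1) * (ξ : ℂ))
      = ∑' k : ℕ, ((w γ k : ℂ) * Complex.exp (Complex.I * ξ) ^ k) * Complex.exp (-(Complex.I * ξ)) := by
        exact tsum_congr (fsym_term_eq γ ξ)
    _ = (∑' k : ℕ, (w γ k : ℂ) * Complex.exp (Complex.I * ξ) ^ k) * Complex.exp (-(Complex.I * ξ)) := by
        rw [tsum_mul_right]
    _ = _ := by rw [tsum_w_mul_pow hγ1 hγ2 (norm_exp_I_mul ξ)]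

end closed

section trig
variable {γ : ℝ}

lemma exp_neg_pi_div_two_mul_I : Complex.exp (((-(Real.pi/2) : ℝ) : ℂ) * Complex.I) = -Complex.I := by
  rw [Complex.exp_mul_I, ← Complex.ofReal_cos, ← Complex.ofReal_sin]
  simp [Real.cos_pi_div_two, Real.sin_pi_div_two]

lemma polar_one_sub_exp (ξ : ℝ) :
    (1 : ℂ) - Complex.exp (Complex.I * ξ) =
      ((2 * Real.sin (ξ/2) : ℝ) : ℂ) * Complex.exp ((((ξ - Real.pi)/2 : ℝ) : ℂ) * Complex.I) := by
  set P : ℂ := Complex.exp (((ξ/2 : ℝ) : ℂ) * Complex.I) with hP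
  set M : ℂ := Complex.exp ((-(ξ/2 : ℝ) : ℂ) * Complex.I) with hM
  have hsin : 2 * Complex.sin ((ξ/2 : ℝ) : ℂ) * Complex.I = P - M := by
    have h1 := Complex.cos_add_sin_I ((ξ/2 : ℝ) : ℂ)
    have h2 := Complex.cos_sub_sin_I ((ξ/2 : ℝ) : ℂ)
    rw [hP, hM]
    have hMM : Complex.exp ((-(ξ/2 : ℝ) : ℂ) * Complex.I) = Complex.exp (-(((ξ/2:ℝ):ℂ)) * Complex.I) := by
      norm_cast
    rw [hMM]
    linear_combination h1 - h2
  have h3 : P * P = Complex.exp (Complex.I * ξ) := by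
    rw [hP, ← Complex.exp_add]
    congr 1
    push_cast
    ring
  have h4 : M * P = 1 := by
    rw [hP, hM, ← Complex.exp_add]
    rw [show ((-(ξ/2 : ℝ) : ℂ)) * Complex.I + (((ξ/2 : ℝ)):ℂ) * Complex.I = 0 by push_cast; ring]
    exact Complex.exp_zero
  have hsplit : Complex.exp ((((ξ - Real.pi)/2 : ℝ) : ℂ) * Complex.I) = P * (-Complex.I) := by
    rw [show ((((ξ - Real.pi)/2 : ℝ)):ℂ) * Complex.I =
        (((ξ/2 : ℝ)):ℂ) * Complex.I + (((-(Real.pi/2) : ℝ)):ℂ) * Complex.I by push_cast; ring]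
    rw [Complex.exp_add, exp_neg_pi_div_two_mul_I, hP]
  rw [hsplit]
  rw [show ((2 * Real.sin (ξ/2) : ℝ) : ℂ) = 2 * Complex.sin ((ξ/2 : ℝ) : ℂ) by
    push_cast [Complex.ofReal_sin]; ring]
  linear_combination P * hsin + h3 - h4

lemma cpow_polar {R θ : ℝ} (hR : 0 < R) (hθ1 : -Real.pi < θ) (hθ2 : θ ≤ Real.pi) :
    ((R:ℂ) * Complex.exp (((θ : ℝ):ℂ) * Complex.I)) ^ (γ:ℂ) =
      ((R ^ γ : ℝ) : ℂ) * Complex.exp (((γ * θ : ℝ):ℂ) * Complex.I) := by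
  have hRne : (R:ℂ) * Complex.exp ((θ:ℂ) * Complex.I) ≠ 0 := by
    apply mul_ne_zero _ (Complex.exp_ne_zero _)
    exact_mod_cast hR.ne'
  rw [Complex.cpow_def_of_ne_zero hRne]
  have hexp : (R:ℂ) * Complex.exp ((θ:ℂ) * Complex.I) =
      Complex.exp (((Real.log R : ℝ):ℂ) + (θ:ℂ) * Complex.I) := by
    rw [Complex.exp_add, ← Complex.ofReal_exp, Real.exp_log hR]
  rw [hexp, Complex.log_exp]
  · rw [Real.rpow_def_of_pos hR, Complex.ofReal_exp, ← Complex.exp_add]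
    congr 1
    push_cast
    ring
  · simpa using hθ1
  · simpa using hθ2
end trig

section qre
variable {γ : ℝ}

lemma fsym_conj (γ ξ : ℝ) : fsym γ (-ξ) = starRingEnd ℂ (fsym γ ξ) := by
  rw [fsym, fsym, map_neg]
  congr 1
  have key : ∀ k : ℕ, (w γ k : ℂ) * Complex.exp (Complex.I * ((k:ℂ) - 1) * ((-ξ : ℝ):ℂ))
      = star ((w γ k : ℂ) * Complex.exp (Complex.I * ((k:ℂ) - 1) * (ξ:ℂ))) := by
    intro k
    rw [star_mul']
    have h1 : star ((w γ k : ℂ)) = ((w γ k : ℂ)) := Complex.conj_ofReal _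
    have h2 : star (Complex.exp (Complex.I * ((k:ℂ) - 1) * (ξ:ℂ)))
        = Complex.exp (starRingEnd ℂ (Complex.I * ((k:ℂ) - 1) * (ξ:ℂ))) :=
      (Complex.exp_conj _).symm
    rw [h1, h2]
    congr 1
    simp only [map_mul, Complex.conj_I, map_sub, map_one, Complex.conj_natCast,
      Complex.conj_ofReal]
    push_cast
    ring
  calc ∑' (k:ℕ), (w γ k : ℂ) * Complex.exp (Complex.I * ((k:ℂ) - 1) * ((-ξ : ℝ):ℂ))
      = ∑' (k:ℕ), star ((w γ k : ℂ) * Complex.exp (Complex.I * ((k:ℂ) - 1) * (ξ:ℂ))) :=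
        tsum_congr key
    _ = (starRingEnd ℂ) (∑' (k:ℕ), (w γ k : ℂ) * Complex.exp (Complex.I * ((k:ℂ) - 1) * (ξ:ℂ))) :=
        tsum_star.symm

lemma qsym_eq (γ ξ : ℝ) : qsym γ ξ = ((2 * (fsym γ ξ).re : ℝ) : ℂ) := by
  rw [qsym, fsym_conj, Complex.add_conj]

lemma qsym_im_zero (γ ξ : ℝ) : (qsym γ ξ).im = 0 := by
  rw [qsym_eq]; exact Complex.ofReal_im _

lemma qsym_re (γ ξ : ℝ) : (qsym γ ξ).re = 2 * (fsym γ ξ).re := by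
  rw [qsym_eq]; exact Complex.ofReal_re _

lemma qsym_even (γ ξ : ℝ) : qsym γ (-ξ) = qsym γ ξ := by
  rw [qsym, qsym, neg_neg, add_comm]

lemma fsym_re_closed (hγ1 : 1 < γ) (hγ2 : γ < 2) {ξ : ℝ} (h0 : 0 < ξ) (hπ : ξ ≤ Real.pi) :
    (fsym γ ξ).re = -((2 * Real.sin (ξ/2)) ^ γ *
      (γ/2 * Real.cos (γ*((ξ - Real.pi)/2) - ξ) + (2-γ)/2 * Real.cos (γ*((ξ - Real.pi)/2)))) := by
  have hpi := Real.pi_pos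
  have hR : 0 < 2 * Real.sin (ξ/2) := by
    have : 0 < Real.sin (ξ/2) := Real.sin_pos_of_pos_of_lt_pi (by linarith) (by linarith)
    linarith
  have hθ1 : -Real.pi < (ξ - Real.pi)/2 := by linarith
  have hθ2 : (ξ - Real.pi)/2 ≤ Real.pi := by linarith
  have stepA : fsym γ ξ = -(((2 * Real.sin (ξ/2) : ℝ)^γ : ℝ) *
      (((γ/2 : ℝ):ℂ) * Complex.exp ((( γ*((ξ - Real.pi)/2) - ξ : ℝ):ℂ) * Complex.I) +
       (((2-γ)/2 : ℝ):ℂ) * Complex.exp (((γ*((ξ - Real.pi)/2) : ℝ):ℂ) * Complex.I))) := by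
    rw [fsym_closed hγ1 hγ2 ξ, polar_one_sub_exp ξ, cpow_polar hR hθ1 hθ2]
    have m1 : Complex.exp (((γ*((ξ - Real.pi)/2) : ℝ):ℂ) * Complex.I) * Complex.exp (-(Complex.I * ξ))
        = Complex.exp ((( γ*((ξ - Real.pi)/2) - ξ : ℝ):ℂ) * Complex.I) := by
      rw [← Complex.exp_add]; congr 1; push_cast; ring
    have m2 : Complex.exp (Complex.I * ξ) * Complex.exp (-(Complex.I * ξ)) = 1 := by
      rw [← Complex.exp_add]; simp
    set P : ℂ := (((2 * Real.sin (ξ/2) : ℝ)^γ : ℝ) : ℂ)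
    set E : ℂ := Complex.exp (Complex.I * ξ)
    set Einv : ℂ := Complex.exp (-(Complex.I * ξ))
    set F : ℂ := Complex.exp (((γ*((ξ - Real.pi)/2) : ℝ):ℂ) * Complex.I)
    set G : ℂ := Complex.exp ((( γ*((ξ - Real.pi)/2) - ξ : ℝ):ℂ) * Complex.I)
    have hc1 : ((γ:ℂ)/2) = (((γ/2 : ℝ)):ℂ) := by push_cast; ring
    have hc2 : (((2 - γ : ℝ)):ℂ)/2 = ((((2-γ)/2 : ℝ)):ℂ) := by push_cast; ring
    rw [hc1, hc2]
    linear_combination (-( (((γ/2 : ℝ)):ℂ) * P)) * m1 + (-(((((2-γ)/2 : ℝ)):ℂ) * P * F)) * m2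
  rw [stepA]
  simp only [Complex.neg_re, Complex.mul_re, Complex.add_re, Complex.add_im, Complex.mul_im,
    Complex.ofReal_re, Complex.ofReal_im, Complex.exp_ofReal_mul_I_re, Complex.exp_ofReal_mul_I_im]
  ring

lemma qsym_re_closed (hγ1 : 1 < γ) (hγ2 : γ < 2) {ξ : ℝ} (h0 : 0 < ξ) (hπ : ξ ≤ Real.pi) :
    (qsym γ ξ).re = (2 * Real.sin (ξ/2)) ^ γ *
      (γ * Real.cos ((2-γ)*((Real.pi - ξ)/2)) - (2-γ) * Real.cos (γ*((Real.pi - ξ)/2))) := by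
  rw [qsym_re, fsym_re_closed hγ1 hγ2 h0 hπ]
  have hc1 : Real.cos (γ*((ξ - Real.pi)/2) - ξ) = -Real.cos ((2-γ)*((Real.pi - ξ)/2)) := by
    rw [show γ*((ξ - Real.pi)/2) - ξ = -(Real.pi - (2-γ)*((Real.pi - ξ)/2)) by ring,
      Real.cos_neg, Real.cos_pi_sub]
  have hc2 : Real.cos (γ*((ξ - Real.pi)/2)) = Real.cos (γ*((Real.pi - ξ)/2)) := by
    rw [show γ*((ξ - Real.pi)/2) = -(γ*((Real.pi - ξ)/2)) by ring, Real.cos_neg]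
  rw [hc1, hc2]
  ring

end qre

section final
variable {γ : ℝ}

lemma fsym_continuous (hγ1 : 1 < γ) (hγ2 : γ < 2) : Continuous (fun ξ : ℝ => fsym γ ξ) := by
  unfold fsym
  apply Continuous.neg
  apply continuous_tsum (u := fun k => |w γ k|)
  · intro k
    apply Continuous.mul continuous_const
    apply Complex.continuous_exp.comp
    exact Continuous.mul continuous_const Complex.continuous_ofReal
  · exact summable_abs_w hγ1 hγ2
  · intro n ξ
    rw [norm_mul, Complex.norm_real, Real.norm_eq_abs]
    have hnorm : ‖Complex.exp (Complex.I * ((n:ℂ) - 1) * (ξ:ℂ))‖ = 1 := by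
      rw [Complex.norm_exp]
      have : (Complex.I * ((n:ℂ) - 1) * (ξ:ℂ)).re = 0 := by
        simp [Complex.mul_re, Complex.mul_im]
      rw [this, Real.exp_zero]
    rw [hnorm, mul_one]

lemma qsym_re_continuous (hγ1 : 1 < γ) (hγ2 : γ < 2) :
    Continuous (fun ξ : ℝ => (qsym γ ξ).re) := by
  have : Continuous (fun ξ : ℝ => qsym γ ξ) := by
    unfold qsym
    exact (fsym_continuous hγ1 hγ2).add ((fsym_continuous hγ1 hγ2).comp continuous_neg)
  exact Complex.continuous_re.comp this

lemma D_pos (hγ1 : 1 < γ) (hγ2 : γ < 2) {t : ℝ} (ht0 : 0 ≤ t) (ht : t < Real.pi/2) :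
    0 < γ * Real.cos ((2-γ)*t) - (2-γ) * Real.cos (γ*t) := by
  have hpi := Real.pi_pos
  have h2γ : 0 < 2 - γ := by linarith
  have h1 : 0 < Real.cos ((2-γ)*t) := by
    apply Real.cos_pos_of_mem_Ioo
    constructor
    · nlinarith
    · nlinarith
  have h2 : Real.cos (γ*t) ≤ Real.cos ((2-γ)*t) := by
    apply Real.cos_le_cos_of_nonneg_of_le_pi
    · positivity
    · nlinarith
    · nlinarith
  nlinarith

lemma qsym_re_pos (hγ1 : 1 < γ) (hγ2 : γ < 2) {ξ : ℝ} (h0 : 0 < ξ) (hπ : ξ ≤ Real.pi) :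
    0 < (qsym γ ξ).re := by
  have hpi := Real.pi_pos
  rw [qsym_re_closed hγ1 hγ2 h0 hπ]
  have hR : 0 < 2 * Real.sin (ξ/2) := by
    have : 0 < Real.sin (ξ/2) := Real.sin_pos_of_pos_of_lt_pi (by linarith) (by linarith)
    linarith
  apply mul_pos (Real.rpow_pos_of_pos hR γ)
  exact D_pos hγ1 hγ2 (by linarith) (by linarith)

lemma qsym_zero (hγ1 : 1 < γ) (hγ2 : γ < 2) : qsym γ 0 = 0 := by
  have hγ0 : (γ:ℂ) ≠ 0 := by
    exact_mod_cast (by linarith : γ ≠ 0)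
  have hf : fsym γ 0 = 0 := by
    rw [fsym_closed hγ1 hγ2 0]
    have h1 : Complex.I * ((0:ℝ):ℂ) = 0 := by simp
    rw [h1, Complex.exp_zero, sub_self, Complex.zero_cpow hγ0]
    ring
  rw [qsym, neg_zero, hf]
  ring

lemma tendsto_right (hγ1 : 1 < γ) (hγ2 : γ < 2) :
    Tendsto (fun ξ : ℝ => (qsym γ ξ).re / |ξ| ^ γ) (𝓝[>] (0:ℝ))
      (𝓝 (-2 * Real.cos (γ * Real.pi / 2))) := by
  have hpi := Real.pi_pos
  -- the inner ratio tends to 1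
  have hslope : Tendsto (slope Real.sin 0) (𝓝[≠] (0:ℝ)) (𝓝 1) := by
    have := (Real.hasDerivAt_sin 0)
    rw [hasDerivAt_iff_tendsto_slope] at this
    simpa [Real.cos_zero] using this
  have hhalf : Tendsto (fun ξ : ℝ => ξ/2) (𝓝[>] (0:ℝ)) (𝓝[≠] (0:ℝ)) := by
    apply tendsto_nhdsWithin_of_tendsto_nhds_of_eventually_within
    · have : Tendsto (fun ξ : ℝ => ξ/2) (𝓝 (0:ℝ)) (𝓝 (0:ℝ)) := by
        have := (continuous_id.div_const (2:ℝ)).tendsto 0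
        simpa using this
      exact this.mono_left nhdsWithin_le_nhds
    · filter_upwards [self_mem_nhdsWithin] with ξ hξ
      rw [Set.mem_Ioi] at hξ
      simp only [Set.mem_compl_iff, Set.mem_singleton_iff]
      exact (by positivity : (0:ℝ) < ξ/2).ne'
  have hinner : Tendsto (fun ξ : ℝ => 2 * Real.sin (ξ/2) / ξ) (𝓝[>] (0:ℝ)) (𝓝 1) := by
    apply Tendsto.congr' _ (hslope.comp hhalf)
    filter_upwards [self_mem_nhdsWithin] with ξ hξ
    rw [Set.mem_Ioi] at hξ
    show slope Real.sin 0 (ξ/2) = 2 * Real.sin (ξ/2) / ξ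
    rw [slope_def_field]
    rw [Real.sin_zero]
    have := hξ.ne'
    field_simp
    simp only [sub_zero, mul_zero]
    exact mul_div_cancel_left₀ _ this
  have hT1 : Tendsto (fun ξ : ℝ => (2 * Real.sin (ξ/2) / ξ) ^ γ) (𝓝[>] (0:ℝ)) (𝓝 1) := by
    have hc : ContinuousAt (fun x : ℝ => x ^ γ) 1 :=
      Real.continuousAt_rpow_const 1 γ (Or.inl one_ne_zero)
    have := hc.tendsto.comp hinner
    simpa [Function.comp_def, Real.one_rpow] using this
  have hT2 : Tendsto (fun ξ : ℝ => γ * Real.cos ((2-γ)*((Real.pi - ξ)/2))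
      - (2-γ) * Real.cos (γ*((Real.pi - ξ)/2))) (𝓝[>] (0:ℝ))
      (𝓝 (-2 * Real.cos (γ * Real.pi / 2))) := by
    have hcont : Continuous (fun ξ : ℝ => γ * Real.cos ((2-γ)*((Real.pi - ξ)/2))
        - (2-γ) * Real.cos (γ*((Real.pi - ξ)/2))) := by
      apply Continuous.sub
      · exact continuous_const.mul (Real.continuous_cos.comp (by continuity))
      · exact continuous_const.mul (Real.continuous_cos.comp (by continuity))
    have h0 := (hcont.tendsto 0).mono_left (nhdsWithin_le_nhds (s := Set.Ioi (0:ℝ)))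
    have hval : γ * Real.cos ((2-γ)*((Real.pi - 0)/2)) - (2-γ) * Real.cos (γ*((Real.pi - 0)/2))
        = -2 * Real.cos (γ * Real.pi / 2) := by
      rw [show (2-γ)*((Real.pi - 0)/2) = Real.pi - γ*Real.pi/2 by ring, Real.cos_pi_sub,
        show γ*((Real.pi-0)/2) = γ*Real.pi/2 by ring]
      ring
    rw [← hval]
    exact h0
  have hprod := hT1.mul hT2
  rw [one_mul] at hprod
  apply Tendsto.congr' _ hprod
  filter_upwards [Ioo_mem_nhdsGT_of_mem (Set.mem_Ico.mpr ⟨le_refl (0:ℝ), hpi⟩)] with ξ hξ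
  obtain ⟨h0, hπ⟩ := hξ
  have hsin : 0 < Real.sin (ξ/2) := Real.sin_pos_of_pos_of_lt_pi (by linarith) (by linarith)
  have h2s : (0:ℝ) ≤ 2 * Real.sin (ξ/2) := by linarith
  rw [qsym_re_closed hγ1 hγ2 h0 (le_of_lt hπ), abs_of_pos h0,
    Real.div_rpow h2s (le_of_lt h0)]
  ring

lemma tendsto_left (hγ1 : 1 < γ) (hγ2 : γ < 2) :
    Tendsto (fun ξ : ℝ => (qsym γ ξ).re / |ξ| ^ γ) (𝓝[<] (0:ℝ))
      (𝓝 (-2 * Real.cos (γ * Real.pi / 2))) := by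
  have hnegmap : Tendsto (fun ξ : ℝ => -ξ) (𝓝[<] (0:ℝ)) (𝓝[>] (0:ℝ)) := by
    apply tendsto_nhdsWithin_of_tendsto_nhds_of_eventually_within
    · have : Tendsto (fun ξ : ℝ => -ξ) (𝓝 (0:ℝ)) (𝓝 (0:ℝ)) := by
        have := continuous_neg.tendsto (0:ℝ)
        simpa using this
      exact this.mono_left nhdsWithin_le_nhds
    · filter_upwards [self_mem_nhdsWithin] with ξ hξ
      rw [Set.mem_Iio] at hξ
      exact Set.mem_Ioi.mpr (by linarith)
  have := (tendsto_right hγ1 hγ2).comp hnegmap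
  apply this.congr
  intro ξ
  show (qsym γ (-ξ)).re / |(-ξ)| ^ γ = (qsym γ ξ).re / |ξ| ^ γ
  rw [qsym_even, abs_neg]

lemma tendsto_both (hγ1 : 1 < γ) (hγ2 : γ < 2) :
    Tendsto (fun ξ : ℝ => (qsym γ ξ).re / |ξ| ^ γ) (𝓝[≠] (0:ℝ))
      (𝓝 (-2 * Real.cos (γ * Real.pi / 2))) := by
  rw [← nhdsLT_sup_nhdsGT (0:ℝ)]
  rw [tendsto_sup]
  exact ⟨tendsto_left hγ1 hγ2, tendsto_right hγ1 hγ2⟩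

end final

/-- `q_γ` is real-valued, continuous and nonnegative on `[-π,π]`, vanishes only at `ξ = 0`
there, and has a zero of order `γ` at the origin:
`q_γ(ξ)/|ξ|^γ → -2cos(γπ/2) > 0` as `ξ → 0`. -/
theorem qsym_properties (γ : ℝ) (hγ1 : 1 < γ) (hγ2 : γ < 2) :
    (∀ ξ : ℝ, (qsym γ ξ).im = 0) ∧
    Continuous (fun ξ : ℝ => (qsym γ ξ).re) ∧
    (∀ ξ ∈ Set.Icc (-Real.pi) Real.pi, 0 ≤ (qsym γ ξ).re) ∧
    (∀ ξ ∈ Set.Icc (-Real.pi) Real.pi, ((qsym γ ξ).re = 0 ↔ ξ = 0)) ∧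
    Tendsto (fun ξ : ℝ => (qsym γ ξ).re / |ξ| ^ γ) (𝓝[≠] (0 : ℝ))
      (𝓝 (-2 * Real.cos (γ * Real.pi / 2))) ∧
    0 < -2 * Real.cos (γ * Real.pi / 2) := by
  have hpi := Real.pi_pos
  have hkey : ∀ ξ ∈ Set.Icc (-Real.pi) Real.pi, ξ ≠ 0 → 0 < (qsym γ ξ).re := by
    intro ξ hξ hne
    rcases lt_or_gt_of_ne hne with h | h
    · have : qsym γ ξ = qsym γ (-ξ) := by
        rw [show ξ = -(-ξ) by ring, qsym_even, neg_neg]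
      rw [this]
      exact qsym_re_pos hγ1 hγ2 (by linarith) (by linarith [hξ.1])
    · exact qsym_re_pos hγ1 hγ2 h hξ.2
  refine ⟨fun ξ => qsym_im_zero γ ξ, qsym_re_continuous hγ1 hγ2, ?_, ?_, tendsto_both hγ1 hγ2, ?_⟩
  · intro ξ hξ
    by_cases hne : ξ = 0
    · subst hne
      rw [qsym_zero hγ1 hγ2]
      simp
    · exact le_of_lt (hkey ξ hξ hne)
  · intro ξ hξ
    constructor
    · intro h
      by_contra hne
      exact absurd h (ne_of_gt (hkey ξ hξ hne))
    · intro h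
      subst h
      rw [qsym_zero hγ1 hγ2]
      simp
  · have h1 : Real.pi/2 < γ * Real.pi / 2 := by nlinarith
    have h2 : γ * Real.pi / 2 < Real.pi + Real.pi/2 := by nlinarith
    have := Real.cos_neg_of_pi_div_two_lt_of_lt h1 h2
    linarith
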